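/- arXiv:1002.2291 — 3 statements merged into one kernel-verified Lean document; each statement's English description precedes it below -/
import Mathlib

section
/- For every integer k ≥ 1, the projection p : F_{k+1}^{k,k} → F_k^{k-1,k} given by (x_1,…,x_{k+1}) ↦ (x_1,…,x_k) is a well-defined locally trivial fibration with fiber homeomorphic to ℂ^k: for every point y of F_k^{k-1,k} there exist an open neighborhood U of y and a homeomorphism h : p^{-1}(U) → U × ℂ^k such that the first coordinate of h agrees with p. -/
noncomputable section

open Module Submodule

/-- Topology on the projectivization (quotient topology). -/
instance (K V : Type*) [DivisionRing K] [AddCommGroup V] [Module K V] [TopologicalSpace V] :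
    TopologicalSpace (Projectivization K V) :=
  inferInstanceAs (TopologicalSpace (Quotient (projectivizationSetoid K V)))

/-- The complex projective space `ℂP^n`. -/
abbrev CP (n : ℕ) := Projectivization ℂ (Fin (n + 1) → ℂ)

/-- `Fconf k i n` is the ordered configuration space `F_k^{i,n}` of `k` pairwise distinct
points of `ℂP^n` whose projective span has dimension `i` (i.e. the span of representative
vectors has linear dimension `i + 1`). -/
def Fconf (k i n : ℕ) : Set (Fin k → CP n) :=
  {x | Function.Injective x ∧
    finrank ℂ (span ℂ (Set.range fun j => (x j).rep)) = i + 1}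

namespace FconfAux

variable {n : ℕ}

def pmk (v : {v : Fin (n + 1) → ℂ // v ≠ 0}) : CP n := Projectivization.mk ℂ v.1 v.2

lemma continuous_pmk : Continuous (pmk (n := n)) := continuous_quotient_mk'

lemma isOpen_iff_pmk (S : Set (CP n)) : IsOpen S ↔ IsOpen (pmk ⁻¹' S) := by
  constructor
  · exact fun h => h.preimage continuous_pmk
  · intro h
    exact h

lemma exists_unit_rep (v : Fin (n+1) → ℂ) (hv : v ≠ 0) :
    ∃ a : ℂˣ, (Projectivization.mk ℂ v hv).rep = (a : ℂ) • v := by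
  have h := Projectivization.mk_rep (Projectivization.mk ℂ v hv)
  rw [Projectivization.mk_eq_mk_iff] at h
  obtain ⟨a, ha⟩ := h
  exact ⟨a, ha.symm⟩

end FconfAux

namespace FconfAux

variable {n : ℕ}

lemma rep_pmk_ne_iff (v : {v : Fin (n + 1) → ℂ // v ≠ 0}) (m : Fin (n+1)) :
    (pmk v).rep m ≠ 0 ↔ v.1 m ≠ 0 := by
  obtain ⟨a, ha⟩ := exists_unit_rep v.1 v.2
  rw [show pmk v = Projectivization.mk ℂ v.1 v.2 from rfl, ha]
  simp [Units.ne_zero]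

lemma isOpen_chart (m : Fin (n+1)) : IsOpen {z : CP n | z.rep m ≠ 0} := by
  rw [isOpen_iff_pmk]
  have : pmk ⁻¹' {z : CP n | z.rep m ≠ 0} = {v : {v : Fin (n + 1) → ℂ // v ≠ 0} | v.1 m ≠ 0} := by
    ext v; exact rep_pmk_ne_iff v m
  rw [this]
  exact isOpen_ne_fun ((continuous_apply m).comp continuous_subtype_val) continuous_const

lemma continuousOn_of_descent {α : Type*} [TopologicalSpace α] {S : Set (CP n)} (hS : IsOpen S)
    {f : CP n → α} {g : {v : Fin (n + 1) → ℂ // v ≠ 0} → α}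
    (hg : ContinuousOn g (pmk ⁻¹' S)) (hfg : ∀ v, pmk v ∈ S → f (pmk v) = g v) :
    ContinuousOn f S := by
  rw [continuousOn_open_iff hS]
  intro t ht
  rw [isOpen_iff_pmk]
  have : pmk ⁻¹' (S ∩ f ⁻¹' t) = (pmk ⁻¹' S) ∩ g ⁻¹' t := by
    ext v
    simp only [Set.mem_preimage, Set.mem_inter_iff, Set.mem_setOf_eq]
    exact and_congr_right fun hv => by rw [hfg v hv]
  rw [this]
  exact hg.isOpen_inter_preimage (hS.preimage continuous_pmk) ht

/-- Local section of the projectivization on a chart. -/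
def sect (m : Fin (n+1)) (z : CP n) : Fin (n + 1) → ℂ := (z.rep m)⁻¹ • z.rep

lemma continuousOn_sect (m : Fin (n+1)) :
    ContinuousOn (sect m) {z : CP n | z.rep m ≠ 0} := by
  apply continuousOn_of_descent (isOpen_chart m) (g := fun v => (v.1 m)⁻¹ • v.1)
  · have h1 : ContinuousOn (fun v : {v : Fin (n + 1) → ℂ // v ≠ 0} => v.1 m)
        (pmk ⁻¹' {z : CP n | z.rep m ≠ 0}) :=
      ((continuous_apply m).comp continuous_subtype_val).continuousOn
    have h2 : ∀ v ∈ pmk ⁻¹' {z : CP n | z.rep m ≠ 0},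
        (fun v : {v : Fin (n + 1) → ℂ // v ≠ 0} => v.1 m) v ≠ 0 := fun v hv =>
      (rep_pmk_ne_iff v m).1 hv
    exact (h1.inv₀ h2).smul continuous_subtype_val.continuousOn
  · intro v hv
    obtain ⟨a, ha⟩ := exists_unit_rep v.1 v.2
    have hvm : v.1 m ≠ 0 := (rep_pmk_ne_iff v m).1 hv
    rw [show pmk v = Projectivization.mk ℂ v.1 v.2 from rfl] at *
    rw [sect, ha]
    simp only [Pi.smul_apply, smul_eq_mul, mul_inv]
    rw [smul_smul]
    congr 1
    field_simp

end FconfAux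

namespace FconfAux

open Matrix

lemma span_range_smul {ι R M : Type*} [Field R] [AddCommGroup M] [Module R M]
    (c : ι → R) (w : ι → M) (hc : ∀ i, c i ≠ 0) :
    span R (Set.range fun i => c i • w i) = span R (Set.range w) := by
  apply le_antisymm
  · rw [span_le]; rintro _ ⟨i, rfl⟩
    exact smul_mem _ _ (subset_span (Set.mem_range_self i))
  · rw [span_le]; rintro _ ⟨i, rfl⟩
    have h : w i = (c i)⁻¹ • (c i • w i) := by
      rw [smul_smul, inv_mul_cancel₀ (hc i), one_smul]
    rw [h]
    exact smul_mem _ _ (subset_span (Set.mem_range_self i))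

lemma sect_ne_zero {n : ℕ} (m : Fin (n + 1)) (z : CP n) (h : z.rep m ≠ 0) :
    sect m z ≠ 0 := by
  intro h0
  have : sect m z m = 0 := by rw [h0]; rfl
  rw [sect] at this
  simp only [Pi.smul_apply, smul_eq_mul, inv_mul_cancel₀ h] at this
  exact one_ne_zero this

lemma sect_eq_smul_rep {n : ℕ} (m : Fin (n + 1)) (z : CP n) :
    sect m z = (z.rep m)⁻¹ • z.rep := rfl

variable {k : ℕ} (v₀ : Fin (k + 1) → ℂ) (j : Fin k → Fin (k + 1))

def colFun (x : Fin k → CP k) : Fin (k + 1) → Fin (k + 1) → ℂ :=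
  Fin.cons v₀ (fun i => sect (j i) (x i))

def Mmat (x : Fin k → CP k) : Matrix (Fin (k + 1)) (Fin (k + 1)) ℂ :=
  (Matrix.of (colFun v₀ j x))ᵀ

lemma Mmat_mulVec (x : Fin k → CP k) (c : Fin (k + 1) → ℂ) :
    Mmat v₀ j x *ᵥ c = ∑ l, c l • colFun v₀ j x l := by
  ext r
  rw [Matrix.mulVec, dotProduct]
  rw [Finset.sum_apply]
  apply Finset.sum_congr rfl
  intro l _
  simp only [Pi.smul_apply, smul_eq_mul, Mmat, Matrix.transpose_apply, Matrix.of_apply]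
  ring

lemma mulVec_cons (x : Fin k → CP k) (a : ℂ) (t : Fin k → ℂ) :
    Mmat v₀ j x *ᵥ Fin.cons a t = a • v₀ + ∑ i, t i • sect (j i) (x i) := by
  rw [Mmat_mulVec, Fin.sum_univ_succ]
  simp [colFun]

lemma adj_mulVec_mulVec (A : Matrix (Fin (k + 1)) (Fin (k + 1)) ℂ) (u : Fin (k + 1) → ℂ) :
    A.adjugate *ᵥ (A *ᵥ u) = A.det • u := by
  rw [Matrix.mulVec_mulVec, Matrix.adjugate_mul, Matrix.smul_mulVec, Matrix.one_mulVec]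

lemma mulVec_adj_mulVec (A : Matrix (Fin (k + 1)) (Fin (k + 1)) ℂ) (u : Fin (k + 1) → ℂ) :
    A *ᵥ (A.adjugate *ᵥ u) = A.det • u := by
  rw [Matrix.mulVec_mulVec, Matrix.mul_adjugate, Matrix.smul_mulVec, Matrix.one_mulVec]

lemma det_ne_iff_indep (x : Fin k → CP k) :
    (Mmat v₀ j x).det ≠ 0 ↔ LinearIndependent ℂ (colFun v₀ j x) := by
  have htr : (fun i => (Mmat v₀ j x)ᵀ i) = colFun v₀ j x := by
    funext i
    rw [Mmat, Matrix.transpose_transpose]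
    rfl
  rw [← isUnit_iff_ne_zero, ← Matrix.isUnit_iff_isUnit_det,
    ← Matrix.linearIndependent_cols_iff_isUnit]
  show LinearIndependent ℂ (fun i => (Mmat v₀ j x)ᵀ i) ↔ _
  rw [htr]

lemma mem_span_sect_iff (x : Fin k → CP k) (hdet : (Mmat v₀ j x).det ≠ 0)
    (u : Fin (k + 1) → ℂ) :
    u ∈ span ℂ (Set.range fun i => sect (j i) (x i)) ↔
      ((Mmat v₀ j x).adjugate *ᵥ u) 0 = 0 := by
  constructor
  · intro hu
    rw [mem_span_range_iff_exists_fun] at hu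
    obtain ⟨t, ht⟩ := hu
    have hu' : u = Mmat v₀ j x *ᵥ Fin.cons 0 t := by
      rw [mulVec_cons, zero_smul, zero_add, ht]
    rw [hu', adj_mulVec_mulVec]
    simp
  · intro h0
    set c : Fin (k + 1) → ℂ := ((Mmat v₀ j x).det)⁻¹ • ((Mmat v₀ j x).adjugate *ᵥ u) with hc
    have hc0 : c 0 = 0 := by
      rw [hc]; simp [h0]
    have hu : Mmat v₀ j x *ᵥ c = u := by
      rw [hc, Matrix.mulVec_smul, mulVec_adj_mulVec, smul_smul, inv_mul_cancel₀ hdet, one_smul]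
    rw [mem_span_range_iff_exists_fun]
    refine ⟨fun i => c i.succ, ?_⟩
    have hcons : Fin.cons (0 : ℂ) (fun i => c i.succ) = c := by
      funext l
      refine Fin.cases ?_ ?_ l
      · rw [hc0]; rfl
      · intro i; rfl
    have := mulVec_cons v₀ j x 0 (fun i => c i.succ)
    rw [hcons, hu, zero_smul, zero_add] at this
    exact this.symm

end FconfAux

namespace FconfAux

variable {k : ℕ}

lemma range_eq_insert_last {α : Type*} (w : Fin (k + 1) → α) :
    Set.range w = Set.range (w ∘ Fin.castSucc) ∪ {w (Fin.last k)} := by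
  ext a
  simp only [Set.mem_range, Set.mem_union, Set.mem_singleton_iff, Function.comp_apply]
  constructor
  · rintro ⟨l, rfl⟩
    rcases Fin.eq_castSucc_or_eq_last l with ⟨i, rfl⟩ | rfl
    · exact Or.inl ⟨i, rfl⟩
    · exact Or.inr rfl
  · rintro (⟨i, rfl⟩ | rfl)
    exacts [⟨_, rfl⟩, ⟨_, rfl⟩]

lemma span_reps_eq (w : Fin (k + 1) → CP k) :
    span ℂ (Set.range fun l => (w l).rep) =
      span ℂ (Set.range fun i => (w (Fin.castSucc i)).rep) ⊔ (ℂ ∙ (w (Fin.last k)).rep) := by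
  rw [range_eq_insert_last (fun l => (w l).rep), span_union]
  rfl

lemma forget_mem (hk : 1 ≤ k) (w : Fin (k + 1) → CP k) (hw : w ∈ Fconf (k + 1) k k) :
    (w ∘ Fin.castSucc) ∈ Fconf k (k - 1) k := by
  refine ⟨hw.1.comp (Fin.castSucc_injective k), ?_⟩
  rw [Nat.sub_add_cancel hk]
  have hle : finrank ℂ (span ℂ (Set.range fun i => ((w ∘ Fin.castSucc) i).rep)) ≤ k := by
    simpa [Set.finrank] using
      finrank_range_le_card (R := ℂ) (fun i : Fin k => (w (Fin.castSucc i)).rep)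
  have hge : k ≤ finrank ℂ (span ℂ (Set.range fun i => ((w ∘ Fin.castSucc) i).rep)) := by
    simp only [Function.comp_apply]
    have h1 := hw.2
    rw [span_reps_eq w] at h1
    have h2 := Submodule.finrank_sup_add_finrank_inf_eq
      (span ℂ (Set.range fun i => (w (Fin.castSucc i)).rep)) (ℂ ∙ (w (Fin.last k)).rep)
    rw [h1] at h2
    have h3 : finrank ℂ (ℂ ∙ (w (Fin.last k)).rep) = 1 :=
      finrank_span_singleton (w (Fin.last k)).rep_nonzero
    omega
  exact le_antisymm hle hge

lemma indep_injective {m : ℕ} (w : Fin m → CP k)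
    (h : LinearIndependent ℂ (fun l => (w l).rep)) : Function.Injective w := by
  intro a b hab
  exact h.injective (congrArg Projectivization.rep hab)

lemma mem_E_iff (hk : 1 ≤ k) (w : Fin (k + 1) → CP k)
    (hx : (w ∘ Fin.castSucc) ∈ Fconf k (k - 1) k) :
    w ∈ Fconf (k + 1) k k ↔
      (w (Fin.last k)).rep ∉ span ℂ (Set.range fun i => (w (Fin.castSucc i)).rep) := by
  have hxr : finrank ℂ (span ℂ (Set.range fun i => (w (Fin.castSucc i)).rep)) = k := by
    have := hx.2
    rwa [Nat.sub_add_cancel hk] at this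
  constructor
  · intro hw hz
    have hle : span ℂ (Set.range fun l => (w l).rep) ≤
        span ℂ (Set.range fun i => (w (Fin.castSucc i)).rep) := by
      rw [span_reps_eq w]
      exact sup_le le_rfl ((span_singleton_le_iff_mem _ _).2 hz)
    have := Submodule.finrank_mono hle
    rw [hw.2, hxr] at this
    omega
  · intro hz
    have hlt : span ℂ (Set.range fun i => (w (Fin.castSucc i)).rep) <
        span ℂ (Set.range fun l => (w l).rep) := by
      refine lt_of_le_of_ne ?_ ?_
      · rw [span_reps_eq w]; exact le_sup_left
      · intro he
        apply hz
        rw [he]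
        exact subset_span (Set.mem_range_self _)
    have h1 : k + 1 ≤ finrank ℂ (span ℂ (Set.range fun l => (w l).rep)) := by
      have := Submodule.finrank_lt_finrank_of_lt hlt
      omega
    have h2 : finrank ℂ (span ℂ (Set.range fun l => (w l).rep)) ≤ k + 1 := by
      have := Submodule.finrank_le (span ℂ (Set.range fun l => (w l).rep))
      rwa [Module.finrank_fin_fun] at this
    have hfr : finrank ℂ (span ℂ (Set.range fun l => (w l).rep)) = k + 1 :=
      le_antisymm h2 h1
    refine ⟨?_, hfr⟩
    apply indep_injective
    rw [linearIndependent_iff_card_eq_finrank_span]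
    simp only [Fintype.card_fin]
    rw [Set.finrank, hfr]

end FconfAux

namespace FconfAux

open Matrix

variable {k : ℕ}

lemma span_sect_eq (j : Fin k → Fin (k + 1)) (x : Fin k → CP k)
    (hch : ∀ i, (x i).rep (j i) ≠ 0) :
    span ℂ (Set.range fun i => sect (j i) (x i)) =
      span ℂ (Set.range fun i => (x i).rep) :=
  span_range_smul (fun i => ((x i).rep (j i))⁻¹) (fun i => (x i).rep)
    (fun i => inv_ne_zero (hch i))

lemma mem_span_reps_iff (v₀ : Fin (k + 1) → ℂ) (j : Fin k → Fin (k + 1)) (x : Fin k → CP k)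
    (hch : ∀ i, (x i).rep (j i) ≠ 0) (hdet : (Mmat v₀ j x).det ≠ 0) (u : Fin (k + 1) → ℂ) :
    u ∈ span ℂ (Set.range fun i => (x i).rep) ↔
      ((Mmat v₀ j x).adjugate *ᵥ u) 0 = 0 := by
  rw [← span_sect_eq j x hch]
  exact mem_span_sect_iff v₀ j x hdet u

def invVec (v₀ : Fin (k + 1) → ℂ) (j : Fin k → Fin (k + 1)) (x : Fin k → CP k)
    (t : Fin k → ℂ) : Fin (k + 1) → ℂ :=
  Mmat v₀ j x *ᵥ Fin.cons 1 t

lemma adj_invVec (v₀ : Fin (k + 1) → ℂ) (j : Fin k → Fin (k + 1)) (x : Fin k → CP k)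
    (t : Fin k → ℂ) :
    (Mmat v₀ j x).adjugate *ᵥ invVec v₀ j x t =
      (Mmat v₀ j x).det • (Fin.cons 1 t : Fin (k + 1) → ℂ) :=
  adj_mulVec_mulVec _ _

lemma invVec_ne_zero (v₀ : Fin (k + 1) → ℂ) (j : Fin k → Fin (k + 1)) (x : Fin k → CP k)
    (hdet : (Mmat v₀ j x).det ≠ 0) (t : Fin k → ℂ) : invVec v₀ j x t ≠ 0 := by
  intro h0
  have h := adj_invVec v₀ j x t
  rw [h0, Matrix.mulVec_zero] at h
  have := congrFun h 0
  simp only [Pi.zero_apply, Pi.smul_apply, Fin.cons_zero, smul_eq_mul, mul_one] at this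
  exact hdet this.symm

lemma mk_invVec_not_mem (v₀ : Fin (k + 1) → ℂ) (j : Fin k → Fin (k + 1)) (x : Fin k → CP k)
    (hch : ∀ i, (x i).rep (j i) ≠ 0) (hdet : (Mmat v₀ j x).det ≠ 0) (t : Fin k → ℂ) :
    (Projectivization.mk ℂ (invVec v₀ j x t) (invVec_ne_zero v₀ j x hdet t)).rep ∉
      span ℂ (Set.range fun i => (x i).rep) := by
  obtain ⟨a, ha⟩ := exists_unit_rep (invVec v₀ j x t) (invVec_ne_zero v₀ j x hdet t)
  rw [mem_span_reps_iff v₀ j x hch hdet, ha, Matrix.mulVec_smul, adj_invVec]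
  simp only [Pi.smul_apply, Fin.cons_zero, smul_eq_mul, mul_one]
  exact mul_ne_zero a.ne_zero hdet

lemma snoc_comp_castSucc' {α : Type*} (x : Fin k → α) (z : α) :
    (Fin.snoc x z : Fin (k + 1) → α) ∘ Fin.castSucc = x := by
  funext i
  simp [Fin.snoc_castSucc]

lemma snoc_mem_E (hk : 1 ≤ k) (v₀ : Fin (k + 1) → ℂ) (j : Fin k → Fin (k + 1))
    (x : Fin k → CP k) (hxB : x ∈ Fconf k (k - 1) k)
    (hch : ∀ i, (x i).rep (j i) ≠ 0) (hdet : (Mmat v₀ j x).det ≠ 0) (t : Fin k → ℂ) :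
    (Fin.snoc x (Projectivization.mk ℂ (invVec v₀ j x t) (invVec_ne_zero v₀ j x hdet t)) :
      Fin (k + 1) → CP k) ∈ Fconf (k + 1) k k := by
  set z := Projectivization.mk ℂ (invVec v₀ j x t) (invVec_ne_zero v₀ j x hdet t) with hz
  have hcomp : (Fin.snoc x z : Fin (k + 1) → CP k) ∘ Fin.castSucc = x := snoc_comp_castSucc' x z
  have hxB' : ((Fin.snoc x z : Fin (k + 1) → CP k) ∘ Fin.castSucc) ∈ Fconf k (k - 1) k := by
    rw [hcomp]; exact hxB
  rw [mem_E_iff hk _ hxB']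
  have h1 : ∀ i : Fin k, (Fin.snoc x z : Fin (k + 1) → CP k) (Fin.castSucc i) = x i :=
    fun i => congrFun hcomp i
  have h2 : (Fin.snoc x z : Fin (k + 1) → CP k) (Fin.last k) = z := Fin.snoc_last _ _
  rw [h2]
  have hr : (Set.range fun i => ((Fin.snoc x z : Fin (k + 1) → CP k) (Fin.castSucc i)).rep) =
      (Set.range fun i => (x i).rep) := by
    have he : (fun i => ((Fin.snoc x z : Fin (k + 1) → CP k) (Fin.castSucc i)).rep) =
        fun i => (x i).rep := by
      funext i
      rw [h1 i]
    rw [he]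
  rw [hr]
  exact mk_invVec_not_mem v₀ j x hch hdet t

lemma d0_ne_zero (hk : 1 ≤ k) (v₀ : Fin (k + 1) → ℂ) (j : Fin k → Fin (k + 1))
    (w : Fin (k + 1) → CP k) (hwE : w ∈ Fconf (k + 1) k k)
    (hch : ∀ i, ((w ∘ Fin.castSucc) i).rep (j i) ≠ 0)
    (hdet : (Mmat v₀ j (w ∘ Fin.castSucc)).det ≠ 0) :
    ((Mmat v₀ j (w ∘ Fin.castSucc)).adjugate *ᵥ (w (Fin.last k)).rep) 0 ≠ 0 := by
  have hxB := forget_mem hk w hwE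
  have hnot := (mem_E_iff hk w hxB).1 hwE
  intro h0
  exact hnot ((mem_span_reps_iff v₀ j (w ∘ Fin.castSucc) hch hdet ((w (Fin.last k)).rep)).2 h0)

lemma cons_ratio (d : Fin (k + 1) → ℂ) (hd0 : d 0 ≠ 0) :
    Fin.cons (1 : ℂ) (fun i => d i.succ / d 0) = (d 0)⁻¹ • d := by
  funext l
  refine Fin.cases ?_ ?_ l
  · simp [inv_mul_cancel₀ hd0]
  · intro i
    simp [Fin.cons_succ, div_eq_inv_mul]

lemma left_identity (hk : 1 ≤ k) (v₀ : Fin (k + 1) → ℂ) (j : Fin k → Fin (k + 1))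
    (w : Fin (k + 1) → CP k) (hwE : w ∈ Fconf (k + 1) k k)
    (hch : ∀ i, ((w ∘ Fin.castSucc) i).rep (j i) ≠ 0)
    (hdet : (Mmat v₀ j (w ∘ Fin.castSucc)).det ≠ 0) :
    Projectivization.mk ℂ
      (invVec v₀ j (w ∘ Fin.castSucc)
        (fun i => ((Mmat v₀ j (w ∘ Fin.castSucc)).adjugate *ᵥ (w (Fin.last k)).rep) i.succ /
          ((Mmat v₀ j (w ∘ Fin.castSucc)).adjugate *ᵥ (w (Fin.last k)).rep) 0))
      (invVec_ne_zero v₀ j (w ∘ Fin.castSucc) hdet _) = w (Fin.last k) := by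
  set M := Mmat v₀ j (w ∘ Fin.castSucc) with hM
  set d := M.adjugate *ᵥ (w (Fin.last k)).rep with hd
  have hd0 : d 0 ≠ 0 := d0_ne_zero hk v₀ j w hwE hch hdet
  have hvec : invVec v₀ j (w ∘ Fin.castSucc) (fun i => d i.succ / d 0) =
      ((d 0)⁻¹ * M.det) • (w (Fin.last k)).rep := by
    rw [invVec, cons_ratio d hd0, Matrix.mulVec_smul, hd, mulVec_adj_mulVec, smul_smul]
  have hne : ((d 0)⁻¹ * M.det) ≠ 0 := mul_ne_zero (inv_ne_zero hd0) hdet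
  simp only [hvec]
  conv_rhs => rw [← Projectivization.mk_rep (w (Fin.last k))]
  rw [Projectivization.mk_eq_mk_iff]
  exact ⟨Units.mk0 _ hne, rfl⟩

lemma right_identity (v₀ : Fin (k + 1) → ℂ) (j : Fin k → Fin (k + 1)) (x : Fin k → CP k)
    (hdet : (Mmat v₀ j x).det ≠ 0) (t : Fin k → ℂ) (i : Fin k) :
    ((Mmat v₀ j x).adjugate *ᵥ
        (Projectivization.mk ℂ (invVec v₀ j x t) (invVec_ne_zero v₀ j x hdet t)).rep) i.succ /
      ((Mmat v₀ j x).adjugate *ᵥ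
        (Projectivization.mk ℂ (invVec v₀ j x t) (invVec_ne_zero v₀ j x hdet t)).rep) 0 = t i := by
  obtain ⟨a, ha⟩ := exists_unit_rep (invVec v₀ j x t) (invVec_ne_zero v₀ j x hdet t)
  rw [ha, Matrix.mulVec_smul, adj_invVec]
  simp only [Pi.smul_apply, Fin.cons_succ, Fin.cons_zero, smul_eq_mul, mul_one]
  rw [← mul_assoc]
  exact mul_div_cancel_left₀ _ (mul_ne_zero a.ne_zero hdet)

end FconfAux

namespace FconfAux

open Matrix

variable {k : ℕ}

def chartSet (j : Fin k → Fin (k + 1)) : Set (Fin k → CP k) :=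
  {x | ∀ i, (x i).rep (j i) ≠ 0}

lemma isOpen_chartSet (j : Fin k → Fin (k + 1)) : IsOpen (chartSet j) := by
  have he : chartSet j =
      ⋂ i, (fun x : Fin k → CP k => x i) ⁻¹' {z : CP k | z.rep (j i) ≠ 0} := by
    ext x
    simp [chartSet]
  rw [he]
  exact isOpen_iInter_of_finite fun i => (isOpen_chart (j i)).preimage (continuous_apply i)

lemma colFun_eq (v₀ : Fin (k + 1) → ℂ) (j : Fin k → Fin (k + 1)) (x : Fin k → CP k) :
    colFun v₀ j x = Fin.cons v₀ (fun i => sect (j i) (x i)) := rfl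

lemma continuousOn_Mmat (v₀ : Fin (k + 1) → ℂ) (j : Fin k → Fin (k + 1)) :
    ContinuousOn (Mmat v₀ j) (chartSet j) := by
  have : ContinuousOn (fun x : Fin k → CP k => (Mmat v₀ j x : Fin (k + 1) → Fin (k + 1) → ℂ))
      (chartSet j) := by
    apply continuousOn_pi.2
    intro r
    apply continuousOn_pi.2
    intro l
    have hml : ∀ x : Fin k → CP k, Mmat v₀ j x r l = colFun v₀ j x l r := fun x => rfl
    simp only [hml]
    refine Fin.cases ?_ ?_ l
    · simp only [colFun_eq, Fin.cons_zero]
      exact continuousOn_const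
    · intro i
      simp only [colFun_eq, Fin.cons_succ]
      have h1 : ContinuousOn (fun x : Fin k → CP k => sect (j i) (x i)) (chartSet j) := by
        refine (continuousOn_sect (j i)).comp (continuous_apply i).continuousOn ?_
        intro x hx
        exact hx i
      exact (continuous_apply r).comp_continuousOn h1
  exact this

lemma continuousOn_det (v₀ : Fin (k + 1) → ℂ) (j : Fin k → Fin (k + 1)) :
    ContinuousOn (fun x => (Mmat v₀ j x).det) (chartSet j) :=
  (continuous_id.matrix_det).comp_continuousOn (continuousOn_Mmat v₀ j)

lemma continuousOn_adj (v₀ : Fin (k + 1) → ℂ) (j : Fin k → Fin (k + 1)) :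
    ContinuousOn (fun x => (Mmat v₀ j x).adjugate) (chartSet j) :=
  (continuous_id.matrix_adjugate).comp_continuousOn (continuousOn_Mmat v₀ j)

lemma continuous_mulVec_pair :
    Continuous (fun q : Matrix (Fin (k + 1)) (Fin (k + 1)) ℂ × (Fin (k + 1) → ℂ) =>
      q.1 *ᵥ q.2) := by
  apply continuous_pi
  intro r
  simp only [Matrix.mulVec, dotProduct]
  apply continuous_finset_sum
  intro l _
  have h1 : Continuous (fun q : Matrix (Fin (k + 1)) (Fin (k + 1)) ℂ × (Fin (k + 1) → ℂ) =>
      q.1 r l) := by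
    have : Continuous (fun M : Matrix (Fin (k + 1)) (Fin (k + 1)) ℂ => M r l) :=
      (continuous_apply l).comp (continuous_apply r)
    exact this.comp continuous_fst
  exact h1.mul ((continuous_apply l).comp continuous_snd)

lemma continuous_cons1 :
    Continuous (fun t : Fin k → ℂ => (Fin.cons 1 t : Fin (k + 1) → ℂ)) := by
  apply continuous_pi
  intro l
  refine Fin.cases ?_ ?_ l
  · simp only [Fin.cons_zero]
    exact continuous_const
  · intro i
    simp only [Fin.cons_succ]
    exact continuous_apply i

end FconfAux

open FconfAux Matrix in
/-- For `k ≥ 1`, forgetting the last point gives a well-defined map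
`p : F_{k+1}^{k,k} → F_k^{k-1,k}` which is a locally trivial fibration with fiber `ℂ^k`:
every point of the base has an open neighborhood `U` together with a homeomorphism
`p⁻¹(U) ≃ U × ℂ^k` whose first coordinate is `p`. -/
theorem Fconf_forget_locally_trivial (k : ℕ) (hk : 1 ≤ k) :
    ∃ p : Fconf (k + 1) k k → Fconf k (k - 1) k,
      (∀ x : Fconf (k + 1) k k,
        (p x : Fin k → CP k) = (x : Fin (k + 1) → CP k) ∘ Fin.castSucc) ∧
      ∀ y : Fconf k (k - 1) k, ∃ U : Set (Fconf k (k - 1) k), IsOpen U ∧ y ∈ U ∧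
        ∃ h : (p ⁻¹' U) ≃ₜ U × (Fin k → ℂ),
          ∀ z : p ⁻¹' U, ((h z).1 : Fconf k (k - 1) k) = p z := by
  classical
  let p : Fconf (k + 1) k k → Fconf k (k - 1) k :=
    fun w => ⟨w.1 ∘ Fin.castSucc, forget_mem hk w.1 w.2⟩
  refine ⟨p, fun w => rfl, ?_⟩
  intro y
  -- choose coordinates j i with (y i).rep (j i) ≠ 0
  have hrep : ∀ i : Fin k, ∃ m, (y.1 i).rep m ≠ 0 := fun i =>
    Function.ne_iff.1 (y.1 i).rep_nonzero
  choose j hj using hrep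
  -- the span of the representatives of y has rank k
  have hyr : finrank ℂ (span ℂ (Set.range fun i => (y.1 i).rep)) = k := by
    have := y.2.2
    rwa [Nat.sub_add_cancel hk] at this
  -- choose v₀ outside the span
  obtain ⟨v₀, hv₀⟩ : ∃ v₀, v₀ ∉ span ℂ (Set.range fun i => (y.1 i).rep) := by
    by_contra hcon
    push_neg at hcon
    have htop : span ℂ (Set.range fun i => (y.1 i).rep) = ⊤ := eq_top_iff'.2 hcon
    rw [htop, finrank_top, Module.finrank_fin_fun] at hyr
    omega
  -- the determinant condition holds at y
  have hdety : (Mmat v₀ j y.1).det ≠ 0 := by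
    rw [det_ne_iff_indep, colFun_eq]
    have hsect : LinearIndependent ℂ (fun i => sect (j i) (y.1 i)) := by
      rw [linearIndependent_iff_card_eq_finrank_span]
      rw [Fintype.card_fin, Set.finrank, span_sect_eq j y.1 hj, hyr]
    refine LinearIndependent.fin_cons hsect ?_
    rw [span_sect_eq j y.1 hj]
    exact hv₀
  -- the trivializing open set
  let U : Set (Fconf k (k - 1) k) :=
    {x | (∀ i, (x.1 i).rep (j i) ≠ 0) ∧ (Mmat v₀ j x.1).det ≠ 0}
  have hCopen : IsOpen (Subtype.val ⁻¹' chartSet j : Set (Fconf k (k - 1) k)) :=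
    (isOpen_chartSet j).preimage continuous_subtype_val
  have hdetC : ContinuousOn (fun x : Fconf k (k - 1) k => (Mmat v₀ j x.1).det)
      (Subtype.val ⁻¹' chartSet j) :=
    (continuousOn_det v₀ j).comp continuous_subtype_val.continuousOn (fun x hx => hx)
  have hUopen : IsOpen U := by
    have he : U = (Subtype.val ⁻¹' chartSet j) ∩
        ((fun x : Fconf k (k - 1) k => (Mmat v₀ j x.1).det) ⁻¹' {(0 : ℂ)}ᶜ) := by
      ext x
      simp only [Set.mem_setOf_eq, Set.mem_inter_iff, Set.mem_preimage, Set.mem_compl_iff,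
        Set.mem_singleton_iff, U, chartSet]
    rw [he]
    exact hdetC.isOpen_inter_preimage hCopen isOpen_compl_singleton
  have hyU : y ∈ U := ⟨hj, hdety⟩
  refine ⟨U, hUopen, hyU, ?_⟩
  -- the trivialization
  let dd : (p ⁻¹' U) → Fin (k + 1) → ℂ := fun w =>
    (Mmat v₀ j (w.1.1 ∘ Fin.castSucc)).adjugate *ᵥ (w.1.1 (Fin.last k)).rep
  let toF : (p ⁻¹' U) → U × (Fin k → ℂ) := fun w =>
    (⟨p w.1, w.2⟩, fun i => dd w i.succ / dd w 0)
  have hmemU : ∀ q : U × (Fin k → ℂ),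
      (⟨Fin.snoc q.1.1.1 (Projectivization.mk ℂ (invVec v₀ j q.1.1.1 q.2)
          (invVec_ne_zero v₀ j q.1.1.1 q.1.2.2 q.2)),
        snoc_mem_E hk v₀ j q.1.1.1 q.1.1.2 q.1.2.1 q.1.2.2 q.2⟩ :
        Fconf (k + 1) k k) ∈ p ⁻¹' U := by
    intro q
    have hp : p ⟨Fin.snoc q.1.1.1 (Projectivization.mk ℂ (invVec v₀ j q.1.1.1 q.2)
          (invVec_ne_zero v₀ j q.1.1.1 q.1.2.2 q.2)),
        snoc_mem_E hk v₀ j q.1.1.1 q.1.1.2 q.1.2.1 q.1.2.2 q.2⟩ = q.1.1 :=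
      Subtype.ext (snoc_comp_castSucc' _ _)
    show p _ ∈ U
    rw [hp]
    exact q.1.2
  let invF : U × (Fin k → ℂ) → (p ⁻¹' U) := fun q =>
    ⟨⟨Fin.snoc q.1.1.1 (Projectivization.mk ℂ (invVec v₀ j q.1.1.1 q.2)
        (invVec_ne_zero v₀ j q.1.1.1 q.1.2.2 q.2)),
      snoc_mem_E hk v₀ j q.1.1.1 q.1.1.2 q.1.2.1 q.1.2.2 q.2⟩, hmemU q⟩
  have hleft : ∀ w, invF (toF w) = w := by
    intro w
    apply Subtype.ext
    apply Subtype.ext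
    funext l
    show (Fin.snoc (w.1.1 ∘ Fin.castSucc) _ : Fin (k + 1) → CP k) l = w.1.1 l
    refine Fin.lastCases ?_ ?_ l
    · rw [Fin.snoc_last]
      exact left_identity hk v₀ j w.1.1 w.1.2 w.2.1 w.2.2
    · intro i
      rw [Fin.snoc_castSucc]
      rfl
  have hright : ∀ q, toF (invF q) = q := by
    intro q
    have hcomp : (Fin.snoc q.1.1.1 (Projectivization.mk ℂ (invVec v₀ j q.1.1.1 q.2)
        (invVec_ne_zero v₀ j q.1.1.1 q.1.2.2 q.2)) : Fin (k + 1) → CP k) ∘ Fin.castSucc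
        = q.1.1.1 := snoc_comp_castSucc' _ _
    refine Prod.ext ?_ ?_
    · apply Subtype.ext
      apply Subtype.ext
      exact hcomp
    · funext i
      show dd (invF q) i.succ / dd (invF q) 0 = q.2 i
      have hdd : dd (invF q) = (Mmat v₀ j q.1.1.1).adjugate *ᵥ
          (Projectivization.mk ℂ (invVec v₀ j q.1.1.1 q.2)
            (invVec_ne_zero v₀ j q.1.1.1 q.1.2.2 q.2)).rep := by
        show (Mmat v₀ j (_ ∘ Fin.castSucc)).adjugate *ᵥ
          ((Fin.snoc q.1.1.1 _ : Fin (k + 1) → CP k) (Fin.last k)).rep = _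
        rw [hcomp, Fin.snoc_last]
      rw [hdd]
      exact right_identity v₀ j q.1.1.1 q.1.2.2 q.2 i
  -- continuity of toF
  have hval2 : Continuous (fun w : (p ⁻¹' U) => w.1.1) :=
    continuous_subtype_val.comp continuous_subtype_val
  have hfstc : Continuous (fun w : (p ⁻¹' U) => w.1.1 ∘ Fin.castSucc) := by
    apply continuous_pi
    intro i
    exact (continuous_apply (Fin.castSucc i)).comp hval2
  have hcomp1 : Continuous (fun w : (p ⁻¹' U) => (⟨p w.1, w.2⟩ : U)) := by
    refine Continuous.subtype_mk ?_ _
    exact Continuous.subtype_mk hfstc _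
  have hcomp2 : Continuous (fun w : (p ⁻¹' U) => (fun i : Fin k => dd w i.succ / dd w 0)) := by
    rw [continuous_iff_continuousAt]
    intro w₀
    obtain ⟨m, hm⟩ : ∃ m, ((w₀.1.1 (Fin.last k)).rep) m ≠ 0 :=
      Function.ne_iff.1 (w₀.1.1 (Fin.last k)).rep_nonzero
    let O : Set (p ⁻¹' U) := {w | (w.1.1 (Fin.last k)).rep m ≠ 0}
    have hOopen : IsOpen O :=
      (isOpen_chart m).preimage ((continuous_apply (Fin.last k)).comp hval2)
    have hw₀O : w₀ ∈ O := hm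
    let ee : (p ⁻¹' U) → Fin (k + 1) → ℂ := fun w =>
      (Mmat v₀ j (w.1.1 ∘ Fin.castSucc)).adjugate *ᵥ sect m (w.1.1 (Fin.last k))
    have hee_cont : ∀ l, ContinuousOn (fun w => ee w l) O := by
      intro l
      have hMc : Continuous (fun w : (p ⁻¹' U) => Mmat v₀ j (w.1.1 ∘ Fin.castSucc)) :=
        (continuousOn_Mmat v₀ j).comp_continuous hfstc (fun w => w.2.1)
      have hAc : Continuous (fun w : (p ⁻¹' U) =>
          (Mmat v₀ j (w.1.1 ∘ Fin.castSucc)).adjugate) :=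
        (continuous_id.matrix_adjugate).comp hMc
      have hsc : ContinuousOn (fun w : (p ⁻¹' U) => sect m (w.1.1 (Fin.last k))) O := by
        refine (continuousOn_sect m).comp
          ((continuous_apply (Fin.last k)).comp hval2).continuousOn ?_
        intro w hw
        exact hw
      have hpair : ContinuousOn (fun w : (p ⁻¹' U) =>
          ((Mmat v₀ j (w.1.1 ∘ Fin.castSucc)).adjugate,
            sect m (w.1.1 (Fin.last k)))) O := hAc.continuousOn.prodMk hsc
      have := continuous_mulVec_pair.comp_continuousOn hpair
      exact (continuous_apply l).comp_continuousOn this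
    have hd0 : ∀ w : (p ⁻¹' U), dd w 0 ≠ 0 := fun w =>
      d0_ne_zero hk v₀ j w.1.1 w.1.2 w.2.1 w.2.2
    have hee_dd : ∀ w ∈ O, ee w = ((w.1.1 (Fin.last k)).rep m)⁻¹ • dd w := by
      intro w _
      show (Mmat v₀ j (w.1.1 ∘ Fin.castSucc)).adjugate *ᵥ
        (((w.1.1 (Fin.last k)).rep m)⁻¹ • (w.1.1 (Fin.last k)).rep) = _
      rw [Matrix.mulVec_smul]
    have heqOn : Set.EqOn (fun w : (p ⁻¹' U) => (fun i : Fin k => dd w i.succ / dd w 0))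
        (fun w => (fun i : Fin k => ee w i.succ / ee w 0)) O := by
      intro w hw
      funext i
      simp only []
      rw [hee_dd w hw]
      simp only [Pi.smul_apply, smul_eq_mul]
      rw [mul_div_mul_left _ _ (inv_ne_zero hw)]
    have heec : ContinuousOn (fun w : (p ⁻¹' U) =>
        (fun i : Fin k => ee w i.succ / ee w 0)) O := by
      apply continuousOn_pi.2
      intro i
      apply (hee_cont i.succ).div (hee_cont 0)
      intro w hw
      rw [hee_dd w hw]
      simp only [Pi.smul_apply, smul_eq_mul]
      exact mul_ne_zero (inv_ne_zero hw) (hd0 w)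
    have := (heec.congr heqOn).continuousAt (hOopen.mem_nhds hw₀O)
    exact this
  have htoFc : Continuous toF := hcomp1.prodMk hcomp2
  -- continuity of invF
  have hinvFc : Continuous invF := by
    refine Continuous.subtype_mk (Continuous.subtype_mk ?_ _) _
    apply continuous_pi
    intro l
    refine Fin.lastCases ?_ ?_ l
    · simp only [Fin.snoc_last]
      have hvec : Continuous (fun q : U × (Fin k → ℂ) => invVec v₀ j q.1.1.1 q.2) := by
        have hMc : Continuous (fun q : U × (Fin k → ℂ) => Mmat v₀ j q.1.1.1) := by
          refine (continuousOn_Mmat v₀ j).comp_continuous ?_ (fun q => q.1.2.1)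
          exact continuous_subtype_val.comp (continuous_subtype_val.comp continuous_fst)
        have hcons : Continuous (fun q : U × (Fin k → ℂ) =>
            (Fin.cons 1 q.2 : Fin (k + 1) → ℂ)) :=
          continuous_cons1.comp continuous_snd
        exact continuous_mulVec_pair.comp (hMc.prodMk hcons)
      exact continuous_pmk.comp (Continuous.subtype_mk hvec
        (fun q : U × (Fin k → ℂ) => invVec_ne_zero v₀ j q.1.1.1 q.1.2.2 q.2))
    · intro i
      simp only [Fin.snoc_castSucc]
      exact (continuous_apply i).comp
        (continuous_subtype_val.comp (continuous_subtype_val.comp continuous_fst))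
  exact ⟨⟨⟨toF, invF, hleft, hright⟩, htoFc, hinvFc⟩, fun z => rfl⟩
end
end

section
/- Let p : B → C be a continuous map of topological spaces such that: C is nonempty and path-connected; for every c ∈ C the fiber p^{-1}(c) is nonempty and path-connected; and every c ∈ C admits an open neighborhood W and a continuous map s : W → B with p(s(w)) = w for all w ∈ W. Then B is path-connected. -/
/-- If `p : B → C` is a continuous map onto a path-connected space `C` such that all fibers
are nonempty and path-connected, and every point of `C` has an open neighborhood on which
`p` admits a continuous section, then `B` is path-connected. -/
theorem pathConnected_of_local_sections {B C : Type*} [TopologicalSpace B]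
    [TopologicalSpace C] (p : B → C) (hp : Continuous p)
    (hC : PathConnectedSpace C)
    (hfib : ∀ c : C, IsPathConnected (p ⁻¹' {c}))
    (hsec : ∀ c : C, ∃ W : Set C, IsOpen W ∧ c ∈ W ∧
      ∃ s : W → B, Continuous s ∧ ∀ w : W, p (s w) = w) :
    PathConnectedSpace B := by
  have hne : Nonempty B := by
    obtain ⟨c⟩ := hC.nonempty
    obtain ⟨b, -, -⟩ := hfib c
    exact ⟨b⟩
  refine ⟨hne, fun b₁ b₂ => ?_⟩
  obtain ⟨γ⟩ : Nonempty (Path (p b₁) (p b₂)) := hC.joined (p b₁) (p b₂)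
  -- the set of times `t` such that some point of the fiber over `γ.extend t`
  -- is joined to `b₁`
  set T : Set ℝ := {t : ℝ | ∃ b : B, p b = γ.extend t ∧ Joined b₁ b} with hT
  -- the key local statement: membership in `T` propagates within small neighborhoods
  have key : ∀ t : ℝ, ∃ V ∈ nhds t, ∀ t₁ ∈ V, ∀ t₂ ∈ V, t₁ ∈ T → t₂ ∈ T := by
    intro t
    obtain ⟨W, hWopen, hcW, s, hs, hps⟩ := hsec (γ.extend t)
    have hU : IsOpen (γ.extend ⁻¹' W) := hWopen.preimage γ.continuous_extend
    set V : Set ℝ := pathComponentIn (γ.extend ⁻¹' W) t with hV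
    have hVU : V ⊆ γ.extend ⁻¹' W := pathComponentIn_subset
    have hVopen : IsOpen V := hU.pathComponentIn t
    have htV : t ∈ V := mem_pathComponentIn_self hcW
    refine ⟨V, hVopen.mem_nhds htV, fun t₁ ht₁ t₂ ht₂ hmem => ?_⟩
    obtain ⟨b, hb, hjb⟩ := hmem
    -- a path from `t₁` to `t₂` inside `V`
    have hVpc : IsPathConnected V := isPathConnected_pathComponentIn hcW
    obtain ⟨σ, hσ⟩ := hVpc.joinedIn t₁ ht₁ t₂ ht₂
    -- transport via the section `s`
    have hcont : Continuous fun u : unitInterval =>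
        s ⟨γ.extend (σ u), hVU (hσ u)⟩ := by
      exact hs.comp ((γ.continuous_extend.comp σ.continuous).subtype_mk _)
    have hjoin : Joined (s ⟨γ.extend t₁, hVU ht₁⟩) (s ⟨γ.extend t₂, hVU ht₂⟩) := by
      refine ⟨{ toFun := fun u => s ⟨γ.extend (σ u), hVU (hσ u)⟩
                continuous_toFun := hcont
                source' := ?_
                target' := ?_ }⟩
      · exact congrArg s (Subtype.ext (congrArg γ.extend σ.source))
      · exact congrArg s (Subtype.ext (congrArg γ.extend σ.target))
    have h₁ : Joined b (s ⟨γ.extend t₁, hVU ht₁⟩) := by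
      refine ((hfib (γ.extend t₁)).joinedIn b ?_ _ ?_).joined
      · simpa using hb
      · simpa using hps ⟨γ.extend t₁, hVU ht₁⟩
    refine ⟨s ⟨γ.extend t₂, hVU ht₂⟩, hps _, ?_⟩
    exact (hjb.trans h₁).trans hjoin
  have hTopen : IsOpen T := by
    rw [isOpen_iff_mem_nhds]
    intro t ht
    obtain ⟨V, hVnhds, hVkey⟩ := key t
    exact Filter.mem_of_superset hVnhds fun t₂ ht₂ =>
      hVkey t (mem_of_mem_nhds hVnhds) t₂ ht₂ ht
  have hTclosed : IsClosed T := by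
    rw [← isOpen_compl_iff, isOpen_iff_mem_nhds]
    intro t ht
    obtain ⟨V, hVnhds, hVkey⟩ := key t
    refine Filter.mem_of_superset hVnhds fun t₂ ht₂ hmem => ?_
    exact ht (hVkey t₂ ht₂ t (mem_of_mem_nhds hVnhds) hmem)
  have hT0 : (0 : ℝ) ∈ T := ⟨b₁, by simp, Joined.refl b₁⟩
  have hTuniv : T = Set.univ := IsClopen.eq_univ ⟨hTclosed, hTopen⟩ ⟨0, hT0⟩
  have hT1 : (1 : ℝ) ∈ T := hTuniv ▸ Set.mem_univ 1
  obtain ⟨b, hb, hjb⟩ := hT1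
  refine hjb.trans ?_
  refine ((hfib (p b₂)).joinedIn b ?_ b₂ ?_).joined
  · simpa using hb
  · simp
end

section
/- Let k ≥ 1, n ≥ 1 and let A_1,…,A_p be nonempty subsets of {1,…,k} with |A_j| ≤ n + 1 for every j. Then the space F_k^{𝒜,n} of injective tuples (x_1,…,x_k) ∈ (ℂP^n)^k such that for every j the projective span of {x_i : i ∈ A_j} has dimension |A_j| − 1 is nonempty and path-connected. -/
noncomputable section

open Module Submodule

namespace FconfAux

variable {n : ℕ}

local notation "V" => (Fin (n + 1) → ℂ)

lemma mk_congr {a b : Fin (n + 1) → ℂ} (ha : a ≠ 0) (hb : b ≠ 0) (h : a = b) :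
    Projectivization.mk ℂ a ha = Projectivization.mk ℂ b hb := by subst h; rfl

/-- A linear "dual family" for a linearly independent family. -/
lemma exists_dual {ι : Type*} [Fintype ι] [DecidableEq ι] {W : Type*} [AddCommGroup W]
    [Module ℂ W] {u : ι → W} (hu : LinearIndependent ℂ u) :
    ∃ π : W →ₗ[ℂ] (ι → ℂ), ∀ i j, π (u i) j = if i = j then 1 else 0 := by
  classical
  let B : Basis ι ℂ (span ℂ (Set.range u)) := Basis.span hu
  let f : span ℂ (Set.range u) →ₗ[ℂ] (ι → ℂ) := B.equivFun.toLinearMap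
  obtain ⟨g, hg⟩ := LinearMap.exists_extend f
  refine ⟨g, fun i j => ?_⟩
  have hmem : u i ∈ span ℂ (Set.range u) := subset_span (Set.mem_range_self i)
  have h1 : g (u i) = f ⟨u i, hmem⟩ := by
    have := LinearMap.congr_fun hg ⟨u i, hmem⟩
    simpa using this
  have h2 : (⟨u i, hmem⟩ : span ℂ (Set.range u)) = B i := by
    ext
    simp [B, Basis.span_apply]
  rw [h1, h2]
  simp [f, Basis.equivFun_apply, Finsupp.single_apply]

/-- Core finiteness lemma: the set of `z` where the affine interpolation of two families
fails to be linearly independent is finite, provided the family at `z = 0` is independent. -/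
lemma bad_finite {ι : Type*} [Fintype ι] [DecidableEq ι] {u v : ι → V}
    (hu : LinearIndependent ℂ u) :
    {z : ℂ | ¬ LinearIndependent ℂ (fun i => (1 - z) • u i + z • v i)}.Finite := by
  classical
  obtain ⟨π, hπ⟩ := exists_dual hu
  set P : Polynomial ℂ := Matrix.det (Matrix.of fun i j =>
    Polynomial.C (π (u i) j) + Polynomial.X * Polynomial.C (π (v i - u i) j)) with hP
  have key : ∀ z : ℂ, P.eval z =
      Matrix.det (Matrix.of fun i j => π ((1 - z) • u i + z • v i) j) := by
    intro z
    have hw : ∀ i, (1 - z) • u i + z • v i = u i + z • (v i - u i) := fun i => by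
      rw [smul_sub, sub_smul, one_smul]; abel
    rw [hP, ← Polynomial.coe_evalRingHom, RingHom.map_det]
    congr 1
    ext i j
    simp [RingHom.mapMatrix_apply, Matrix.map_apply, hw i, map_add, map_smul, smul_eq_mul]
    ring
  have hP0 : P.eval 0 = 1 := by
    rw [key 0]
    have : (Matrix.of fun i j => π ((1 - (0:ℂ)) • u i + (0:ℂ) • v i) j) = (1 : Matrix ι ι ℂ) := by
      ext i j
      simp [hπ, Matrix.one_apply, eq_comm]
    rw [this, Matrix.det_one]
  have hPne : P ≠ 0 := fun h => by simp [h] at hP0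
  apply Set.Finite.subset (Polynomial.finite_setOf_isRoot hPne)
  intro z hz
  simp only [Set.mem_setOf_eq] at hz ⊢
  by_contra hroot
  apply hz
  have hdet : IsUnit (Matrix.of fun i j => π ((1 - z) • u i + z • v i) j) := by
    rw [Matrix.isUnit_iff_isUnit_det, isUnit_iff_ne_zero]
    rw [← key z]
    exact hroot
  have hrows := Matrix.linearIndependent_rows_iff_isUnit.2 hdet
  have : LinearIndependent ℂ (π ∘ fun i => (1 - z) • u i + z • v i) := hrows
  exact this.of_comp π

/-- Moment-curve vectors with distinct parameters are linearly independent. -/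
lemma moment_indep {ι : Type*} [Fintype ι] {t : ι → ℂ} (ht : Function.Injective t)
    (hc : Fintype.card ι ≤ n + 1) :
    LinearIndependent ℂ (fun i => (fun m : Fin (n + 1) => t i ^ (m : ℕ)) : ι → V) := by
  classical
  let e : Fin (Fintype.card ι) ≃ ι := (Fintype.equivFin ι).symm
  rw [← linearIndependent_equiv e]
  apply LinearIndependent.of_comp (LinearMap.funLeft ℂ ℂ (Fin.castLE hc))
  have heq : (LinearMap.funLeft ℂ ℂ (Fin.castLE hc)) ∘
      ((fun i => (fun m : Fin (n + 1) => t i ^ (m : ℕ)) : ι → V) ∘ e) =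
      fun a => Matrix.vandermonde (t ∘ e) a := by
    funext a b
    simp [LinearMap.funLeft, Matrix.vandermonde]
  rw [heq]
  apply Matrix.linearIndependent_rows_iff_isUnit.2
  rw [Matrix.isUnit_iff_isUnit_det, isUnit_iff_ne_zero]
  exact Matrix.det_vandermonde_ne_zero_iff.2 (ht.comp e.injective)

lemma pair_indep_of_ne {x y : CP n} (h : x ≠ y) :
    LinearIndependent ℂ ![x.rep, y.rep] := by
  rw [linearIndependent_fin2]
  refine ⟨by simpa using y.rep_nonzero, fun a ha => ?_⟩
  simp only [Matrix.cons_val_one, Matrix.head_cons, Matrix.cons_val_zero] at ha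
  rcases eq_or_ne a 0 with rfl | ha0
  · rw [zero_smul] at ha
    exact x.rep_nonzero ha.symm
  · apply h
    have : Projectivization.mk ℂ x.rep x.rep_nonzero = Projectivization.mk ℂ y.rep y.rep_nonzero := by
      rw [Projectivization.mk_eq_mk_iff]
      exact ⟨Units.mk0 a ha0, ha⟩
    rwa [Projectivization.mk_rep, Projectivization.mk_rep] at this

lemma ne_of_pair_indep {w₁ w₂ : Fin (n + 1) → ℂ} (h : LinearIndependent ℂ ![w₁, w₂])
    (h₁ : w₁ ≠ 0) (h₂ : w₂ ≠ 0) :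
    Projectivization.mk ℂ w₁ h₁ ≠ Projectivization.mk ℂ w₂ h₂ := by
  rw [Ne, Projectivization.mk_eq_mk_iff]
  rintro ⟨a, ha⟩
  have := (linearIndependent_fin2.1 h).2 a
  simp only [Matrix.cons_val_one, Matrix.head_cons, Matrix.cons_val_zero] at this
  exact this ha

/-- Replacing each vector of a set by a nonzero multiple (its `rep` after `mk`) keeps the span. -/
lemma span_rep_eq {ι : Type*} (g : ι → V) (hg : ∀ i, g i ≠ 0) (s : Set ι) :
    span ℂ ((fun i => (Projectivization.mk ℂ (g i) (hg i)).rep) '' s) = span ℂ (g '' s) := by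
  apply le_antisymm <;> rw [span_le] <;> rintro - ⟨i, hi, rfl⟩
  · show (Projectivization.mk ℂ (g i) (hg i)).rep ∈ (span ℂ (g '' s) : Set _)
    obtain ⟨a, ha⟩ := Projectivization.exists_smul_eq_mk_rep ℂ (g i) (hg i)
    rw [← ha]
    exact smul_mem _ _ (subset_span (Set.mem_image_of_mem _ hi))
  · show g i ∈ (span ℂ ((fun i => (Projectivization.mk ℂ (g i) (hg i)).rep) '' s) : Set _)
    obtain ⟨a, ha⟩ := Projectivization.exists_smul_eq_mk_rep ℂ (g i) (hg i)
    have : g i = a⁻¹ • (Projectivization.mk ℂ (g i) (hg i)).rep := by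
      rw [← ha, smul_smul, inv_mul_cancel, one_smul]
    rw [this]
    exact smul_mem _ _ (subset_span (Set.mem_image_of_mem _ hi))

lemma finrank_span_image_iff {k : ℕ} {f : Fin k → V} (s : Finset (Fin k)) :
    finrank ℂ (span ℂ (f '' ↑s)) = s.card ↔
      LinearIndependent ℂ (fun i : ↥s => f i) := by
  rw [linearIndependent_iff_card_eq_finrank_span, Fintype.card_coe]
  have h1 : (Set.range fun i : ↥s => f ↑i) = f '' ↑s := by
    ext t
    simp only [Set.mem_range, Set.mem_image, Finset.mem_coe, Subtype.exists, exists_prop]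
  rw [h1]
  unfold Set.finrank
  exact eq_comm

end FconfAux

open FconfAux in
open Module Submodule in
/-- For `k, n ≥ 1` and nonempty subsets `A_1, …, A_p` of `{1, …, k}` of cardinality at most
`n + 1`, the space `F_k^{𝒜,n}` of injective tuples in `(ℂP^n)^k` such that for each `j` the
points indexed by `A_j` span a projective subspace of dimension `|A_j| - 1` is nonempty and
path-connected. -/
theorem Fconf_family_isPathConnected (k n p : ℕ) (hk : 1 ≤ k) (hn : 1 ≤ n)
    (A : Fin p → Finset (Fin k)) (hne : ∀ j, (A j).Nonempty)
    (hcard : ∀ j, (A j).card ≤ n + 1) :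
    IsPathConnected {x : Fin k → CP n | Function.Injective x ∧
      ∀ j, finrank ℂ (span ℂ ((fun i => (x i).rep) '' ↑(A j))) = (A j).card} := by
  classical
  set S : Set (Fin k → CP n) := {x : Fin k → CP n | Function.Injective x ∧
      ∀ j, finrank ℂ (span ℂ ((fun i => (x i).rep) '' ↑(A j))) = (A j).card} with hS
  -- the moment curve base configuration
  set c : Fin k → (Fin (n + 1) → ℂ) := fun i => fun m => ((i : ℕ) : ℂ) ^ (m : ℕ) with hc
  have htinj : Function.Injective (fun i : Fin k => ((i : ℕ) : ℂ)) := fun i j h => by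
    exact Fin.val_injective (Nat.cast_injective h)
  have hcne : ∀ i, c i ≠ 0 := by
    intro i h
    have := congrFun h ⟨0, Nat.succ_pos n⟩
    simp [hc] at this
  have hcpair : ∀ i i' : Fin k, i ≠ i' → LinearIndependent ℂ ![c i, c i'] := by
    intro i i' hii
    have ht2 : Function.Injective (fun b : Fin 2 => ((![i, i'] b : ℕ) : ℂ)) := by
      intro a b hab
      have := htinj hab
      fin_cases a <;> fin_cases b <;> simp_all <;> exact absurd this hii
    have h2 : (2 : ℕ) ≤ n + 1 := by omega
    have := moment_indep (n := n) ht2 (by simpa using h2)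
    have heq : (fun b : Fin 2 => (fun m : Fin (n + 1) => ((![i, i'] b : ℕ) : ℂ) ^ (m : ℕ)))
        = ![c i, c i'] := by
      funext b
      fin_cases b <;> rfl
    rwa [heq] at this
  have hcsub : ∀ s : Finset (Fin k), s.card ≤ n + 1 →
      LinearIndependent ℂ (fun i : ↥s => c i) := by
    intro s hs
    have := moment_indep (n := n) (t := fun i : ↥s => (((i : Fin k) : ℕ) : ℂ))
      (fun a b hab => Subtype.ext (htinj hab)) (by rwa [Fintype.card_coe])
    exact this
  set x₀ : Fin k → CP n := fun i => Projectivization.mk ℂ (c i) (hcne i) with hx₀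
  have hx₀inj : Function.Injective x₀ := by
    intro i i' h
    by_contra hii
    exact ne_of_pair_indep (hcpair i i' hii) (hcne i) (hcne i') h
  have hrankx₀ : ∀ j, finrank ℂ (span ℂ ((fun i => (x₀ i).rep) '' ↑(A j))) = (A j).card := by
    intro j
    rw [show (fun i => (x₀ i).rep) = fun i => (Projectivization.mk ℂ (c i) (hcne i)).rep from rfl,
      span_rep_eq c hcne, finrank_span_image_iff]
    exact hcsub (A j) (hcard j)
  have hx₀S : x₀ ∈ S := ⟨hx₀inj, hrankx₀⟩
  refine ⟨x₀, hx₀S, ?_⟩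
  rintro y ⟨hyinj, hyA⟩
  -- interpolation data
  set u : Fin k → (Fin (n + 1) → ℂ) := fun i => (x₀ i).rep with hu
  set v : Fin k → (Fin (n + 1) → ℂ) := fun i => (y i).rep with hv
  set w : ℂ → Fin k → (Fin (n + 1) → ℂ) := fun z i => (1 - z) • u i + z • v i with hw
  have hw0 : w 0 = u := by funext i; simp [hw]
  have hw1 : w 1 = v := by funext i; simp [hw]
  -- endpoint independence facts
  have huA : ∀ j, LinearIndependent ℂ (fun i : ↥(A j) => u i) :=
    fun j => (finrank_span_image_iff (A j)).1 (hrankx₀ j)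
  have hvA : ∀ j, LinearIndependent ℂ (fun i : ↥(A j) => v i) :=
    fun j => (finrank_span_image_iff (A j)).1 (hyA j)
  have hupair : ∀ i i' : Fin k, i ≠ i' → LinearIndependent ℂ ![u i, u i'] :=
    fun i i' hii => pair_indep_of_ne (fun h => hii (hx₀inj h))
  have hvpair : ∀ i i' : Fin k, i ≠ i' → LinearIndependent ℂ ![v i, v i'] :=
    fun i i' hii => pair_indep_of_ne (fun h => hii (hyinj h))
  have hune : ∀ i, u i ≠ 0 := fun i => (x₀ i).rep_nonzero
  have hvne : ∀ i, v i ≠ 0 := fun i => (y i).rep_nonzero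
  -- bad set
  set Bad : Set ℂ :=
    (⋃ j, {z : ℂ | ¬ LinearIndependent ℂ (fun i : ↥(A j) => w z i)}) ∪
    ((⋃ q : {q : Fin k × Fin k // q.1 ≠ q.2},
      {z : ℂ | ¬ LinearIndependent ℂ ![w z q.1.1, w z q.1.2]}) ∪
    (⋃ i : Fin k, {z : ℂ | ¬ LinearIndependent ℂ (fun _ : Unit => w z i)})) with hBad
  have hpair_eq : ∀ (z : ℂ) (i i' : Fin k),
      (fun b : Fin 2 => (1 - z) • (![u i, u i'] b) + z • (![v i, v i'] b))
        = ![w z i, w z i'] := by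
    intro z i i'
    funext b
    fin_cases b <;> simp [hw]
  have hBadFin : Bad.Finite := by
    refine Set.Finite.union (Set.finite_iUnion fun j => ?_)
      (Set.Finite.union (Set.finite_iUnion fun q => ?_) (Set.finite_iUnion fun i => ?_))
    · exact bad_finite (u := fun i : ↥(A j) => u i) (v := fun i : ↥(A j) => v i) (huA j)
    · have := bad_finite (u := ![u q.1.1, u q.1.2]) (v := ![v q.1.1, v q.1.2])
        (hupair q.1.1 q.1.2 q.2)
      refine this.subset fun z hz => ?_
      simp only [Set.mem_setOf_eq] at hz ⊢
      rwa [hpair_eq z q.1.1 q.1.2]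
    · exact bad_finite (u := fun _ : Unit => u i) (v := fun _ : Unit => v i)
        (linearIndependent_unique_iff.2 (hune i))
  -- goodness off the bad set
  have hGood : ∀ z ∉ Bad, (∀ i, w z i ≠ 0) ∧
      (∀ i i' : Fin k, i ≠ i' → LinearIndependent ℂ ![w z i, w z i']) ∧
      (∀ j, LinearIndependent ℂ (fun i : ↥(A j) => w z i)) := by
    intro z hz
    simp only [hBad, Set.mem_union, Set.mem_iUnion, Set.mem_setOf_eq, not_or, not_exists,
      not_not] at hz
    obtain ⟨h1, h2, h3⟩ := hz
    exact ⟨fun i => linearIndependent_unique_iff.1 (h3 i),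
      fun i i' hii => h2 ⟨(i, i'), hii⟩, fun j => h1 j⟩
  have h0good : (0 : ℂ) ∉ Bad := by
    intro h
    simp only [hBad, Set.mem_union, Set.mem_iUnion, Set.mem_setOf_eq] at h
    rcases h with ⟨j, hj⟩ | ⟨⟨q, hq⟩ | ⟨i, hi⟩⟩
    · exact hj (by rw [hw0]; exact huA j)
    · exact hq (by rw [hw0]; exact hupair q.1.1 q.1.2 q.2)
    · exact hi (by rw [hw0]; exact linearIndependent_unique_iff.2 (hune i))
  have h1good : (1 : ℂ) ∉ Bad := by
    intro h
    simp only [hBad, Set.mem_union, Set.mem_iUnion, Set.mem_setOf_eq] at h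
    rcases h with ⟨j, hj⟩ | ⟨⟨q, hq⟩ | ⟨i, hi⟩⟩
    · exact hj (by rw [hw1]; exact hvA j)
    · exact hq (by rw [hw1]; exact hvpair q.1.1 q.1.2 q.2)
    · exact hi (by rw [hw1]; exact linearIndependent_unique_iff.2 (hvne i))
  -- the complement of Bad is path connected
  have hrank : 1 < Module.rank ℝ ℂ := by
    rw [Complex.rank_real_complex]
    norm_num
  have hPC : IsPathConnected (Badᶜ : Set ℂ) :=
    (hBadFin.countable).isPathConnected_compl_of_one_lt_rank hrank
  obtain ⟨γ, hγ⟩ := hPC.joinedIn 0 h0good 1 h1good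
  -- build the configuration path
  have hwne : ∀ t : unitInterval, ∀ i, w (γ t) i ≠ 0 := fun t i => (hGood _ (hγ t)).1 i
  set Γfun : unitInterval → (Fin k → CP n) :=
    fun t => fun i => Projectivization.mk ℂ (w (γ t) i) (hwne t i) with hΓfun
  have hcont : Continuous Γfun := by
    apply continuous_pi
    intro i
    have hq : Continuous (Projectivization.mk' ℂ : {v : Fin (n+1) → ℂ // v ≠ 0} → CP n) := by
      exact continuous_quotient_mk'
    have hbase : Continuous fun t : unitInterval => w (γ t) i := by
      have hγc : Continuous fun t : unitInterval => (γ t : ℂ) := γ.continuous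
      have : Continuous fun z : ℂ => w z i := by
        simp only [hw]
        fun_prop
      exact this.comp hγc
    have : Continuous fun t : unitInterval =>
        (⟨w (γ t) i, hwne t i⟩ : {v : Fin (n+1) → ℂ // v ≠ 0}) :=
      hbase.subtype_mk _
    exact hq.comp this
  have hΓ0 : Γfun 0 = x₀ := by
    funext i
    have hz : (γ 0 : ℂ) = 0 := by rw [γ.source]
    have hwi : w (γ 0) i = u i := by rw [hz, hw0]
    rw [hΓfun]
    refine (mk_congr _ (hune i) hwi).trans ?_
    exact Projectivization.mk_rep (x₀ i)
  have hΓ1 : Γfun 1 = y := by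
    funext i
    have hz : (γ 1 : ℂ) = 1 := by rw [γ.target]
    have hwi : w (γ 1) i = v i := by rw [hz, hw1]
    rw [hΓfun]
    refine (mk_congr _ (hvne i) hwi).trans ?_
    exact Projectivization.mk_rep (y i)
  refine ⟨⟨⟨Γfun, hcont⟩, hΓ0, hΓ1⟩, fun t => ?_⟩
  -- membership in S along the path
  obtain ⟨hne', hpair', hA'⟩ := hGood _ (hγ t)
  constructor
  · intro i i' h
    by_contra hii
    exact ne_of_pair_indep (hpair' i i' hii) (hne' i) (hne' i') h
  · intro j
    show finrank ℂ (span ℂ ((fun i =>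
      (Projectivization.mk ℂ (w (γ t) i) (hwne t i)).rep) '' ↑(A j))) = (A j).card
    rw [span_rep_eq (w (γ t)) (hwne t), finrank_span_image_iff]
    exact hA' j
end
end
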